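/- Let L be an N×N Laplacian matrix (L·1 = 0, nonnegative off-diagonal negated weights) and D = diag(ι_1,...,ι_N) with ι_i ∈ {0,1} not all zero. If every node of the graph is reachable by a directed path from some node i with ι_i = 1, then every eigenvalue of L̃ = L + D has strictly positive real part; in particular L̃ is invertible. -/

import Mathlib

open Matrix Finset

lemma stmt19_aux (N : ℕ) (a : Fin N → Fin N → ℝ)
    (ha : ∀ i j, 0 ≤ a i j)
    (ι : Fin N → ℝ) (hι : ∀ i, ι i = 0 ∨ ι i = 1)
    (hreach : ∀ v : Fin N, ∃ r : Fin N, ι r = 1 ∧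
      Relation.ReflTransGen (fun u v' : Fin N => 0 < a v' u) r v)
    (z : ℂ) (hz : z.re ≤ 0) (v : Fin N → ℂ)
    (heq : ∀ i, ((↑(∑ k, a i k) : ℂ) + ↑(ι i) - z) * v i = ∑ k, (↑(a i k) : ℂ) * v k) :
    v = 0 := by
  by_contra hne
  have hex : ∃ j, v j ≠ 0 := by
    by_contra h
    push_neg at h
    exact hne (funext fun j => h j)
  obtain ⟨j0, hj0⟩ := hex
  obtain ⟨i0, -, hi0⟩ := Finset.exists_max_image Finset.univ (fun i => ‖v i‖) ⟨j0, mem_univ _⟩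
  set Mv := ‖v i0‖ with hMv
  have hMpos : 0 < Mv := lt_of_lt_of_le (norm_pos_iff.mpr hj0) (hi0 j0 (mem_univ _))
  have hle : ∀ k, ‖v k‖ ≤ Mv := fun k => hi0 k (mem_univ _)
  have hιnn : ∀ i, 0 ≤ ι i := fun i => by rcases hι i with h | h <;> rw [h] <;> norm_num
  -- norm bound at a max index
  have hnormb : ∀ i, ‖v i‖ = Mv → ‖((↑(∑ k, a i k) : ℂ) + ↑(ι i) - z)‖ ≤ ∑ k, a i k := by
    intro i hi
    have h1 : ‖(((↑(∑ k, a i k) : ℂ) + ↑(ι i) - z) * v i)‖ ≤ (∑ k, a i k) * Mv := by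
      rw [heq i]
      calc ‖∑ k, (↑(a i k) : ℂ) * v k‖ ≤ ∑ k, ‖(↑(a i k) : ℂ) * v k‖ := norm_sum_le _ _
        _ ≤ ∑ k, a i k * Mv := by
            refine Finset.sum_le_sum fun k _ => ?_
            rw [norm_mul, Complex.norm_real, Real.norm_eq_abs, abs_of_nonneg (ha i k)]
            exact mul_le_mul_of_nonneg_left (hle k) (ha i k)
        _ = (∑ k, a i k) * Mv := by rw [Finset.sum_mul]
    rw [norm_mul, hi] at h1
    exact le_of_mul_le_mul_right h1 hMpos
  have hιzero : ∀ i, ‖v i‖ = Mv → ι i = 0 ∧ z.re = 0 := by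
    intro i hi
    have h2 := hnormb i hi
    have h3 : ((↑(∑ k, a i k) : ℂ) + ↑(ι i) - z).re ≤ ‖((↑(∑ k, a i k) : ℂ) + ↑(ι i) - z)‖ :=
      Complex.re_le_norm _
    simp only [Complex.sub_re, Complex.add_re, Complex.ofReal_re] at h3
    have h4 : ι i - z.re ≤ 0 := by linarith
    constructor
    · rcases hι i with h | h
      · exact h
      · exfalso; rw [h] at h4; linarith
    · linarith [hιnn i]
  -- z = 0
  obtain ⟨hι0, hre⟩ := hιzero i0 rfl
  have hzim : z.im = 0 := by
    have h2 := hnormb i0 rfl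
    rw [hι0] at h2
    have h5 : ‖((↑(∑ k, a i0 k) : ℂ) + (0:ℝ) - z)‖ ^ 2 = (∑ k, a i0 k) ^ 2 + z.im ^ 2 := by
      rw [Complex.sq_norm, Complex.normSq_apply]
      simp [hre]
      ring
    nlinarith [norm_nonneg ((↑(∑ k, a i0 k) : ℂ) + (0:ℝ) - z), Finset.sum_nonneg (fun k (_ : k ∈ Finset.univ) => ha i0 k)]
  have hz0 : z = 0 := Complex.ext hre hzim
  subst hz0
  -- key propagation fact
  have key : ∀ i, ‖v i‖ = Mv → ∀ k, 0 < a i k → v k = v i := by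
    intro i hi k hk
    have hιi : ι i = 0 := (hιzero i hi).1
    have heqi : (↑(∑ k, a i k) : ℂ) * v i = ∑ k, (↑(a i k) : ℂ) * v k := by
      have := heq i
      rw [hιi] at this
      simpa using this
    -- real part trick
    have hsum : ∑ k, a i k * ((starRingEnd ℂ) (v i) * v k).re = (∑ k, a i k) * Mv ^ 2 := by
      have h6 : ((starRingEnd ℂ) (v i) * ((↑(∑ k, a i k) : ℂ) * v i)).re
          = ((starRingEnd ℂ) (v i) * ∑ k, (↑(a i k) : ℂ) * v k).re := by rw [heqi]
      calc ∑ k, a i k * ((starRingEnd ℂ) (v i) * v k).re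
          = ((starRingEnd ℂ) (v i) * ∑ k, (↑(a i k) : ℂ) * v k).re := by
            rw [Finset.mul_sum, Complex.re_sum]
            refine Finset.sum_congr rfl fun k _ => ?_
            rw [show (starRingEnd ℂ) (v i) * ((↑(a i k) : ℂ) * v k)
                = (↑(a i k) : ℂ) * ((starRingEnd ℂ) (v i) * v k) by ring]
            rw [Complex.re_ofReal_mul]
        _ = ((starRingEnd ℂ) (v i) * ((↑(∑ k, a i k) : ℂ) * v i)).re := h6.symm
        _ = (∑ k, a i k) * Mv ^ 2 := by
            rw [show (starRingEnd ℂ) (v i) * ((↑(∑ k, a i k) : ℂ) * v i)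
                = (↑(∑ k, a i k) : ℂ) * ((starRingEnd ℂ) (v i) * v i) by ring]
            rw [Complex.re_ofReal_mul, mul_comm ((starRingEnd ℂ) (v i)) (v i), Complex.mul_conj]
            rw [Complex.ofReal_re, Complex.normSq_eq_norm_sq, hi]
    have hpt : ∀ k ∈ Finset.univ, a i k * ((starRingEnd ℂ) (v i) * v k).re ≤ a i k * Mv ^ 2 := by
      intro k _
      refine mul_le_mul_of_nonneg_left ?_ (ha i k)
      calc ((starRingEnd ℂ) (v i) * v k).re ≤ ‖(starRingEnd ℂ) (v i) * v k‖ := Complex.re_le_norm _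
        _ = ‖v i‖ * ‖v k‖ := by rw [norm_mul, RCLike.norm_conj]
        _ ≤ Mv * Mv := mul_le_mul (le_of_eq hi) (hle k) (norm_nonneg _) (le_of_lt hMpos)
        _ = Mv ^ 2 := (sq Mv).symm
    have hall := (Finset.sum_eq_sum_iff_of_le hpt).mp (by rw [hsum, ← Finset.sum_mul])
    have hk' : ((starRingEnd ℂ) (v i) * v k).re = Mv ^ 2 :=
      mul_left_cancel₀ (ne_of_gt hk) (hall k (mem_univ _))
    -- equality case forces v k = v i
    set c := (starRingEnd ℂ) (v i) * v k with hc
    have hcabs : ‖c‖ = c.re := by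
      refine le_antisymm ?_ (Complex.re_le_norm _)
      rw [hk']
      calc ‖c‖ = ‖v i‖ * ‖v k‖ := by rw [hc, norm_mul, RCLike.norm_conj]
        _ ≤ Mv * Mv := mul_le_mul (le_of_eq hi) (hle k) (norm_nonneg _) (le_of_lt hMpos)
        _ = Mv ^ 2 := (sq Mv).symm
    have hcim : c.im = 0 := by
      have h7 : ‖c‖ ^ 2 = c.re * c.re + c.im * c.im := by
        rw [Complex.sq_norm, Complex.normSq_apply]
      rw [hcabs] at h7
      nlinarith
    have hceq : c = (↑(Mv ^ 2) : ℂ) := by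
      apply Complex.ext
      · rw [Complex.ofReal_re]; exact hk'
      · rw [Complex.ofReal_im]; exact hcim
    have hvi : (starRingEnd ℂ) (v i) * v i = (↑(Mv ^ 2) : ℂ) := by
      rw [mul_comm, Complex.mul_conj, Complex.normSq_eq_norm_sq, hi]
    have hmul : (starRingEnd ℂ) (v i) * (v k - v i) = 0 := by
      rw [mul_sub, ← hc, hceq, hvi, sub_self]
    have hvine : (starRingEnd ℂ) (v i) ≠ 0 := by
      simp only [ne_eq, map_eq_zero]
      intro h
      rw [h, norm_zero] at hi
      exact absurd hi.symm (ne_of_gt hMpos)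
    have := (mul_eq_zero.mp hmul).resolve_left hvine
    exact sub_eq_zero.mp this
  have prop : ∀ u w, Relation.ReflTransGen (fun u v' : Fin N => 0 < a v' u) u w →
      ‖v w‖ = Mv → v u = v w := by
    intro u w h
    induction h with
    | refl => intro _; rfl
    | @tail b c hub hbc ih =>
      intro hcM
      have hcb : v b = v c := key c hcM b hbc
      have hbM : ‖v b‖ = Mv := by rw [hcb]; exact hcM
      rw [← hcb]; exact ih hbM
  obtain ⟨r, hr1, hrr⟩ := hreach i0
  have hvr : v r = v i0 := prop r i0 hrr hMv.symm
  have hrM : ‖v r‖ = Mv := by rw [hvr]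
  have hcontra := (hιzero r hrM).1
  rw [hr1] at hcontra
  norm_num at hcontra

/-- If `L` is the Laplacian of a weighted directed graph and
`D = diag(ι₁,…,ι_N)` with `ι_i ∈ {0,1}` not all zero, and every node is
reachable by a directed path from some node `i` with `ι_i = 1`, then every
eigenvalue of `L̃ = L + D` has strictly positive real part; in particular `L̃`
is invertible. -/
theorem stmt_19 (N : ℕ) (a : Fin N → Fin N → ℝ)
    (ha : ∀ i j, 0 ≤ a i j) (hdiag : ∀ i, a i i = 0)
    (L : Matrix (Fin N) (Fin N) ℝ)
    (hLdef : ∀ i j, L i j = if i = j then ∑ k, a i k else -(a i j))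
    (ι : Fin N → ℝ) (hι : ∀ i, ι i = 0 ∨ ι i = 1) (hι1 : ∃ i, ι i = 1)
    -- every node is reachable from some root `r` with `ι r = 1`, where there
    -- is an edge from `u` to `v` precisely when `a v u > 0`
    (hreach : ∀ v : Fin N, ∃ r : Fin N, ι r = 1 ∧
      Relation.ReflTransGen (fun u v' : Fin N => 0 < a v' u) r v) :
    (∀ z ∈ spectrum ℂ ((L + Matrix.diagonal ι).map (Complex.ofReal ·)), 0 < z.re) ∧
      IsUnit (L + Matrix.diagonal ι) := by
  set Mc := (L + Matrix.diagonal ι).map (Complex.ofReal ·) with hMc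
  have hMentry : ∀ i j, Mc i j = if i = j then ((↑(∑ k, a i k) : ℂ) + ↑(ι i)) else -↑(a i j) := by
    intro i j
    rw [hMc]
    simp only [Matrix.map_apply, Matrix.add_apply, Matrix.diagonal_apply, hLdef]
    split_ifs with h
    · subst h; push_cast; ring
    · push_cast; ring
  have hkey : ∀ (z : ℂ), z.re ≤ 0 → ∀ v : Fin N → ℂ, Mc.mulVec v = z • v → v = 0 := by
    intro z hz v hv
    refine stmt19_aux N a ha ι hι hreach z hz v ?_
    intro i
    have h1 := congrFun hv i
    simp only [Matrix.mulVec, dotProduct, Pi.smul_apply, smul_eq_mul] at h1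
    have h2 : ∑ j, Mc i j * v j
        = ((↑(∑ k, a i k) : ℂ) + ↑(ι i)) * v i - ∑ k, (↑(a i k) : ℂ) * v k := by
      rw [← Finset.add_sum_erase _ (fun j => Mc i j * v j) (Finset.mem_univ i)]
      rw [hMentry i i, if_pos rfl]
      have h3 : ∑ j ∈ Finset.univ.erase i, Mc i j * v j
          = -∑ j ∈ Finset.univ.erase i, (↑(a i j) : ℂ) * v j := by
        rw [← Finset.sum_neg_distrib]
        refine Finset.sum_congr rfl fun j hj => ?_
        rw [hMentry i j, if_neg (Ne.symm (Finset.mem_erase.mp hj).1)]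
        ring
      rw [h3]
      have h4 : ∑ j ∈ Finset.univ.erase i, (↑(a i j) : ℂ) * v j
          = ∑ k, (↑(a i k) : ℂ) * v k := by
        rw [Finset.sum_erase_eq_sub (Finset.mem_univ i), hdiag i]
        simp
      rw [h4]; ring
    rw [h2] at h1
    linear_combination h1
  have hspec : ∀ z ∈ spectrum ℂ Mc, 0 < z.re := by
    intro zz hzz
    by_contra hpos
    push_neg at hpos
    rw [spectrum.mem_iff] at hzz
    have hdet : (zz • (1 : Matrix (Fin N) (Fin N) ℂ) - Mc).det = 0 := by
      by_contra hd
      exact hzz (by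
        rw [Algebra.algebraMap_eq_smul_one]
        exact (Matrix.isUnit_iff_isUnit_det _).mpr (isUnit_iff_ne_zero.mpr hd))
    obtain ⟨w, hw, hw0⟩ := (Matrix.exists_mulVec_eq_zero_iff).mpr hdet
    apply hw
    apply hkey zz hpos w
    rw [Matrix.sub_mulVec, Matrix.smul_mulVec, Matrix.one_mulVec, sub_eq_zero] at hw0
    exact hw0.symm
  refine ⟨hspec, ?_⟩
  have h0 : (0 : ℂ) ∉ spectrum ℂ Mc := fun h => lt_irrefl (0:ℝ) (by simpa using hspec 0 h)
  have hMcU : IsUnit Mc := spectrum.isUnit_of_zero_notMem (R := ℂ) h0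
  have hdetC : Mc.det = Complex.ofReal ((L + Matrix.diagonal ι).det) := by
    rw [hMc]
    exact (RingHom.map_det Complex.ofRealHom _).symm
  have hdetR : (L + Matrix.diagonal ι).det ≠ 0 := by
    intro h
    have := (Matrix.isUnit_iff_isUnit_det _).mp hMcU
    rw [hdetC, h] at this
    simp at this
  exact (Matrix.isUnit_iff_isUnit_det _).mpr (isUnit_iff_ne_zero.mpr hdetR)
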